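/- Let F be a free group and let ρ, σ ∈ F with ρ * σ ≠ σ * ρ. If A₁, A₂, A₃ are pairwise disjoint finite subsets of F with ρ • A₁ = A₃ and σ • (A₁ ∪ A₃) = A₁ ∪ A₂, then A₁ = A₂ = A₃ = ∅. -/

import Mathlib

open Pointwise

namespace Stmt8Aux

open FreeGroup List

/-- domain predicate for the shift permutation -/
abbrev Dp (L : List (Bool × Bool)) (a : Bool) (x : ℕ) : Prop :=
  L[x]? = some (a, false) ∨ ∃ j, x = j + 1 ∧ L[j]? = some (a, true)

/-- range predicate for the shift permutation -/
abbrev Rp (L : List (Bool × Bool)) (a : Bool) (x : ℕ) : Prop :=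
  (∃ j, x = j + 1 ∧ L[j]? = some (a, false)) ∨ L[x]? = some (a, true)

variable {L : List (Bool × Bool)}

theorem lt_of_getElem?_eq_some {x : ℕ} {p : Bool × Bool} (h : L[x]? = some p) :
    x < L.length := (List.getElem?_eq_some_iff.mp h).1

open Classical in
/-- the partial shift as an equivalence of subtypes -/
noncomputable def shiftEquiv
    (hadj : ∀ i (x b : Bool), L[i]? = some (x, b) → L[i+1]? ≠ some (x, !b))
    (a : Bool) :
    {x : Fin (L.length + 1) // Dp L a ↑x} ≃ {x : Fin (L.length + 1) // Rp L a ↑x} where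
  toFun x :=
    if h : L[(x.1 : ℕ)]? = some (a, false) then
      ⟨⟨x.1 + 1, by have := lt_of_getElem?_eq_some h; omega⟩, Or.inl ⟨x.1, rfl, h⟩⟩
    else
      ⟨⟨x.1 - 1, by have := x.1.isLt; omega⟩, by
        rcases x.2 with h' | ⟨j, hj, hLj⟩
        · exact absurd h' h
        · refine Or.inr ?_
          show L[(x.1 : ℕ) - 1]? = some (a, true)
          have : (x.1 : ℕ) - 1 = j := by omega
          rw [this]; exact hLj⟩
  invFun x :=
    if h : L[(x.1 : ℕ)]? = some (a, true) then
      ⟨⟨x.1 + 1, by have := lt_of_getElem?_eq_some h; omega⟩, Or.inr ⟨x.1, rfl, h⟩⟩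
    else
      ⟨⟨x.1 - 1, by have := x.1.isLt; omega⟩, by
        rcases x.2 with ⟨j, hj, hLj⟩ | h'
        · refine Or.inl ?_
          show L[(x.1 : ℕ) - 1]? = some (a, false)
          have : (x.1 : ℕ) - 1 = j := by omega
          rw [this]; exact hLj
        · exact absurd h' h⟩
  left_inv := by
    rintro ⟨x, hx⟩
    beta_reduce
    rcases hx with h | ⟨j, hj, hLj⟩
    · beta_reduce
      rw [dif_pos h]
      beta_reduce
      have h2 : L[(x : ℕ) + 1]? ≠ some (a, true) := by
        have := hadj (x : ℕ) a false h
        simpa using this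
      apply Subtype.ext
      simp only [h2, dif_neg, not_false_iff]
      apply Fin.ext
      simp
    · beta_reduce
      have h1 : L[(x : ℕ)]? ≠ some (a, false) := by
        intro hcon
        have := hadj j a true hLj
        rw [show j + 1 = (x : ℕ) by omega] at this
        simpa using this hcon
      rw [dif_neg h1]
      beta_reduce
      have hx1 : (x : ℕ) - 1 = j := by omega
      have h2 : L[((x : ℕ) - 1)]? = some (a, true) := by rw [hx1]; exact hLj
      apply Subtype.ext
      simp only [h2, dif_pos]
      apply Fin.ext
      simp only []
      show ((x : ℕ) - 1) + 1 = (x : ℕ)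
      omega
  right_inv := by
    rintro ⟨x, hx⟩
    rcases hx with ⟨j, hj, hLj⟩ | h
    · beta_reduce
      have h1 : L[(x : ℕ)]? ≠ some (a, true) := by
        intro hcon
        have := hadj j a false hLj
        rw [show j + 1 = (x : ℕ) by omega] at this
        simpa using this hcon
      rw [dif_neg h1]
      beta_reduce
      have hx1 : (x : ℕ) - 1 = j := by omega
      have h2 : L[((x : ℕ) - 1)]? = some (a, false) := by rw [hx1]; exact hLj
      apply Subtype.ext
      simp only [h2, dif_pos]
      apply Fin.ext
      simp only []
      show ((x : ℕ) - 1) + 1 = (x : ℕ)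
      omega
    · beta_reduce
      rw [dif_pos h]
      beta_reduce
      have h2 : L[(x : ℕ) + 1]? ≠ some (a, false) := by
        have := hadj (x : ℕ) a true h
        simpa using this
      apply Subtype.ext
      simp only [h2, dif_neg, not_false_iff]
      apply Fin.ext
      simp

open Classical in
/-- the permutation associated to a generator -/
noncomputable def piPerm
    (hadj : ∀ i (x b : Bool), L[i]? = some (x, b) → L[i+1]? ≠ some (x, !b))
    (a : Bool) : Equiv.Perm (Fin (L.length + 1)) :=
  (shiftEquiv hadj a).extendSubtype

open Classical in
theorem piPerm_true
    (hadj : ∀ i (x b : Bool), L[i]? = some (x, b) → L[i+1]? ≠ some (x, !b))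
    {a : Bool} {j : ℕ} (h : L[j]? = some (a, true))
    (h1 : j + 1 < L.length + 1) (h2 : j < L.length + 1) :
    piPerm hadj a ⟨j + 1, h1⟩ = ⟨j, h2⟩ := by
  have hmem : Dp L a ((⟨j + 1, h1⟩ : Fin (L.length + 1)) : ℕ) := Or.inr ⟨j, rfl, h⟩
  rw [piPerm, Equiv.extendSubtype_apply_of_mem (shiftEquiv hadj a) ⟨j + 1, h1⟩ hmem]
  have hne : L[j + 1]? ≠ some (a, false) := by
    have := hadj j a true h
    simpa using this
  show ((shiftEquiv hadj a ⟨⟨j+1, h1⟩, hmem⟩ : {x : Fin (L.length + 1) // Rp L a ↑x}) : Fin (L.length+1)) = _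
  rw [shiftEquiv]
  simp only [Equiv.coe_fn_mk]
  beta_reduce
  rw [dif_neg hne]
  apply Fin.ext
  show (j + 1) - 1 = j
  omega

open Classical in
theorem piPerm_false
    (hadj : ∀ i (x b : Bool), L[i]? = some (x, b) → L[i+1]? ≠ some (x, !b))
    {a : Bool} {j : ℕ} (h : L[j]? = some (a, false))
    (h1 : j + 1 < L.length + 1) (h2 : j < L.length + 1) :
    piPerm hadj a ⟨j, h2⟩ = ⟨j + 1, h1⟩ := by
  have hmem : Dp L a ((⟨j, h2⟩ : Fin (L.length + 1)) : ℕ) := Or.inl h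
  rw [piPerm, Equiv.extendSubtype_apply_of_mem (shiftEquiv hadj a) ⟨j, h2⟩ hmem]
  show ((shiftEquiv hadj a ⟨⟨j, h2⟩, hmem⟩ : {x : Fin (L.length + 1) // Rp L a ↑x}) : Fin (L.length+1)) = _
  rw [shiftEquiv]
  simp only [Equiv.coe_fn_mk]
  beta_reduce
  rw [dif_pos h]

end Stmt8Aux

namespace Stmt8Aux

open FreeGroup

theorem rf_lemma (w : FreeGroup Bool) (hw : w ≠ 1) :
    ∃ (n : ℕ) (φ : FreeGroup Bool →* Equiv.Perm (Fin (n + 1))), φ w ≠ 1 := by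
  classical
  set L := w.toWord with hL
  have hred : FreeGroup.reduce L = L := w.reduce_toWord
  have hadj : ∀ i (x b : Bool), L[i]? = some (x, b) → L[i+1]? ≠ some (x, !b) := by
    intro i x b hb1 hb2
    obtain ⟨hi, e1⟩ := List.getElem?_eq_some_iff.mp hb1
    obtain ⟨hi2, e2⟩ := List.getElem?_eq_some_iff.mp hb2
    have heq : L = L.take i ++ (x, b) :: (x, !b) :: L.drop (i + 2) := by
      conv_lhs => rw [← List.take_append_drop i L]
      rw [List.drop_eq_getElem_cons hi, e1, List.drop_eq_getElem_cons hi2, e2]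
    exact FreeGroup.reduce.not (hred.trans heq)
  have hlen : 0 < L.length := by
    rcases Nat.eq_zero_or_pos L.length with h0 | h0
    · exact absurd (FreeGroup.toWord_eq_nil_iff.mp (List.length_eq_zero_iff.mp h0)) hw
    · exact h0
  refine ⟨L.length, FreeGroup.lift (fun a => piPerm hadj a), ?_⟩
  have main : ∀ m j (hj : j + m = L.length),
      ((L.drop j).map (fun p => cond p.2 (piPerm hadj p.1) (piPerm hadj p.1)⁻¹)).prod
        ⟨L.length, by omega⟩ = ⟨j, by omega⟩ := by
    intro m
    induction m with
    | zero =>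
      intro j hj
      have : j = L.length := by omega
      subst this
      simp [List.drop_length]
    | succ m ih =>
      intro j hj
      have hjlt : j < L.length := by omega
      rw [List.drop_eq_getElem_cons hjlt, List.map_cons, List.prod_cons,
        Equiv.Perm.mul_apply, ih (j + 1) (by omega)]
      have hget : L[j]? = some L[j] := List.getElem?_eq_getElem hjlt
      rcases hp : L[j] with ⟨a, s⟩
      rw [hp] at hget
      cases s
      · show (piPerm hadj a)⁻¹ ⟨j + 1, by omega⟩ = ⟨j, by omega⟩
        rw [← piPerm_false hadj hget (by omega) (by omega), ← Equiv.Perm.mul_apply, inv_mul_cancel, Equiv.Perm.one_apply]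
      · show piPerm hadj a ⟨j + 1, by omega⟩ = ⟨j, by omega⟩
        exact piPerm_true hadj hget _ _
  intro hone
  have h1 := main L.length 0 (by omega)
  have h2 : FreeGroup.lift (fun a => piPerm hadj a) w =
      ((L.map (fun p => cond p.2 (piPerm hadj p.1) (piPerm hadj p.1)⁻¹)).prod) := by
    conv_lhs => rw [← FreeGroup.mk_toWord (x := w)]
    rw [FreeGroup.lift_mk, ← hL]
  rw [hone] at h2
  rw [List.drop_zero] at h1
  rw [← h2] at h1
  rw [Equiv.Perm.one_apply] at h1
  have : L.length = 0 := by simpa [Fin.ext_iff] using h1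
  omega

end Stmt8Aux

namespace Stmt8Aux

open FreeGroup

theorem hopf (ψ : FreeGroup Bool →* FreeGroup Bool) (hs : Function.Surjective ψ)
    {w : FreeGroup Bool} (hw : ψ w = 1) : w = 1 := by
  by_contra hne
  obtain ⟨n, φ, hφ⟩ := rf_lemma w hne
  haveI : Finite (FreeGroup Bool →* Equiv.Perm (Fin (n + 1))) :=
    Finite.of_injective (fun χ => (FreeGroup.lift.symm χ : Bool → Equiv.Perm (Fin (n + 1))))
      (fun χ₁ χ₂ h => FreeGroup.lift.symm.injective h)
  have hinj : Function.Injective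
      (fun χ : FreeGroup Bool →* Equiv.Perm (Fin (n + 1)) => χ.comp ψ) := by
    intro χ₁ χ₂ h
    apply MonoidHom.ext
    intro x
    obtain ⟨y, rfl⟩ := hs x
    exact DFunLike.congr_fun h y
  obtain ⟨χ, hχ⟩ := Finite.injective_iff_surjective.mp hinj φ
  apply hφ
  rw [← hχ]
  show χ (ψ w) = 1
  rw [hw]
  exact map_one χ

theorem freeGroup_commute {γ : Type*} [Subsingleton γ] (u v : FreeGroup γ) : Commute u v := by
  have key : ∀ x : FreeGroup γ, ∀ y : FreeGroup γ, Commute x y := by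
    intro x
    refine FreeGroup.induction_on (C := fun x => ∀ y, Commute x y) x ?_ ?_ ?_ ?_
    · exact fun y => Commute.one_left y
    · intro a y
      refine FreeGroup.induction_on (C := fun y => Commute (pure a) y) y ?_ ?_ ?_ ?_
      · exact Commute.one_right _
      · intro b
        rw [Subsingleton.elim b a]
        exact Commute.refl _
      · intro b hb
        exact hb.inv_right
      · intro p q hp hq
        exact hp.mul_right hq
    · intro a ha y
      exact (ha y).inv_left
    · intro p q hp hq y
      exact (hp y).mul_left (hq y)
  exact key u v

theorem no_relation {α : Type*} (ρ σ : FreeGroup α) (hnc : ρ * σ ≠ σ * ρ)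
    {w : FreeGroup Bool} (hw : FreeGroup.lift (fun b => cond b ρ σ) w = 1) : w = 1 := by
  classical
  by_contra hne
  set f : FreeGroup Bool →* FreeGroup α := FreeGroup.lift (fun b => cond b ρ σ) with hf
  set H : Subgroup (FreeGroup α) := f.range with hH
  letI : IsFreeGroup H := inferInstance
  set γ := IsFreeGroup.Generators H with hγ
  set e : H ≃* FreeGroup γ := IsFreeGroup.toFreeGroup H with he
  set θ : FreeGroup Bool →* FreeGroup γ := e.toMonoidHom.comp f.rangeRestrict with hθ
  have hθs : Function.Surjective θ := e.surjective.comp f.rangeRestrict_surjective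
  -- exponent-sum homomorphism
  set E : FreeGroup γ →* Multiplicative (γ →₀ ℤ) :=
    FreeGroup.lift (fun c => Multiplicative.ofAdd (Finsupp.single c 1)) with hE
  set S : Submodule ℤ (γ →₀ ℤ) :=
    Submodule.span ℤ {Multiplicative.toAdd (E (θ (FreeGroup.of true))),
      Multiplicative.toAdd (E (θ (FreeGroup.of false)))} with hS
  -- every exponent vector lies in S
  have claim1 : ∀ z : FreeGroup Bool, Multiplicative.toAdd (E (θ z)) ∈ S := by
    set K : Subgroup (FreeGroup Bool) :=
      { carrier := {z | Multiplicative.toAdd (E (θ z)) ∈ S}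
        one_mem' := by simp
        mul_mem' := by
          intro p q hp hq
          show Multiplicative.toAdd (E (θ (p * q))) ∈ S
          rw [_root_.map_mul, _root_.map_mul, toAdd_mul]
          exact S.add_mem hp hq
        inv_mem' := by
          intro p hp
          show Multiplicative.toAdd (E (θ p⁻¹)) ∈ S
          rw [_root_.map_inv, _root_.map_inv, toAdd_inv]
          exact S.neg_mem hp } with hK
    have h2 : Subgroup.closure (Set.range (FreeGroup.of (α := Bool))) = ⊤ := by
      have h1 : (FreeGroup.lift (FreeGroup.of (α := Bool))).range =
          Subgroup.closure (Set.range (FreeGroup.of (α := Bool))) :=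
        FreeGroup.range_lift_eq_closure
      rw [FreeGroup.lift_of_eq_id] at h1
      rw [← h1]
      ext t
      simp [MonoidHom.mem_range]
    have h3 : Subgroup.closure (Set.range (FreeGroup.of (α := Bool))) ≤ K := by
      apply (Subgroup.closure_le K).mpr
      rintro _ ⟨b, rfl⟩
      cases b
      · exact Submodule.subset_span (Set.mem_insert_of_mem _ rfl)
      · exact Submodule.subset_span (Set.mem_insert _ _)
    rw [h2] at h3
    intro z
    exact h3 (Subgroup.mem_top z)
  -- S is everything
  have hsingle : ∀ c : γ, Finsupp.single c (1 : ℤ) ∈ S := by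
    intro c
    obtain ⟨z, hz⟩ := hθs (FreeGroup.of c)
    have := claim1 z
    rw [hz] at this
    simpa [hE, FreeGroup.lift_apply_of] using this
  have hStop : S = ⊤ := by
    rw [eq_top_iff]
    intro x hx
    clear hx
    induction x using Finsupp.induction with
    | zero => exact S.zero_mem
    | single_add a b g _ _ ih =>
      refine S.add_mem ?_ ih
      have : Finsupp.single a b = b • Finsupp.single a (1 : ℤ) := by
        rw [Finsupp.smul_single, smul_eq_mul, mul_one]
      rw [this]
      exact S.smul_mem b (hsingle a)
  -- rank bound
  have hcard : (Cardinal.mk γ) ≤ 2 := by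
    have hr1 : Module.rank ℤ (γ →₀ ℤ) = Cardinal.mk γ := by
      simpa using rank_finsupp_self (R := ℤ) (ι := γ)
    have hr2 : Module.rank ℤ S ≤ 2 := by
      refine le_trans (rank_span_le _) ?_
      refine le_trans (Cardinal.mk_insert_le) ?_
      rw [Cardinal.mk_singleton]
      exact (one_add_one_eq_two).le
    rw [← hr1]
    calc Module.rank ℤ (γ →₀ ℤ) = Module.rank ℤ (⊤ : Submodule ℤ (γ →₀ ℤ)) := (rank_top ℤ _).symm
      _ = Module.rank ℤ S := by rw [hStop]
      _ ≤ 2 := hr2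
  haveI : Finite γ := by
    rw [← Cardinal.lt_aleph0_iff_finite]
    refine lt_of_le_of_lt hcard ?_
    have := Cardinal.nat_lt_aleph0.{u_1} 2
    simpa using this
  haveI := Fintype.ofFinite γ
  have hcard2 : Fintype.card γ ≤ 2 := by
    have := hcard
    rw [Cardinal.mk_fintype] at this
    exact_mod_cast this
  have hρ : ρ ∈ H := ⟨FreeGroup.of true, by simp [hf, FreeGroup.lift_apply_of]⟩
  have hσ : σ ∈ H := ⟨FreeGroup.of false, by simp [hf, FreeGroup.lift_apply_of]⟩
  by_cases hle : Fintype.card γ ≤ 1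
  · -- subsingleton case: H is commutative
    haveI : Subsingleton γ := Fintype.card_le_one_iff_subsingleton.mp hle
    have hc : Commute (⟨ρ, hρ⟩ : H) (⟨σ, hσ⟩ : H) := by
      have := freeGroup_commute (e ⟨ρ, hρ⟩) (e ⟨σ, hσ⟩)
      have h3 : e (⟨ρ, hρ⟩ * ⟨σ, hσ⟩) = e (⟨σ, hσ⟩ * ⟨ρ, hρ⟩) := by
        rw [_root_.map_mul, _root_.map_mul]
        exact this.eq
      exact e.injective h3
    apply hnc
    have := congrArg (Subtype.val) hc.eq
    simpa using this
  · -- rank 2 case: Hopfian argument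
    have hcard3 : Fintype.card γ = 2 := by omega
    have eq2 : γ ≃ Bool := Fintype.equivOfCardEq (by rw [hcard3, Fintype.card_bool])
    set Ψ : FreeGroup Bool →* FreeGroup Bool :=
      (FreeGroup.freeGroupCongr eq2).toMonoidHom.comp θ with hΨ
    have hΨs : Function.Surjective Ψ := (FreeGroup.freeGroupCongr eq2).surjective.comp hθs
    have hΨw : Ψ w = 1 := by
      have h4 : f.rangeRestrict w = 1 := by
        apply Subtype.ext
        simpa using hw
      simp [hΨ, hθ, h4]
    exact hne (hopf Ψ hΨs hΨw)

end Stmt8Aux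

/-- If `ρ` and `σ` do not commute in a free group, then disjoint finite sets with
`ρ • A₁ = A₃` and `σ • (A₁ ∪ A₃) = A₁ ∪ A₂` must all be empty. -/
theorem stmt8 {α : Type*} (ρ σ : FreeGroup α) (hnc : ρ * σ ≠ σ * ρ)
    (A₁ A₂ A₃ : Set (FreeGroup α)) (h1 : A₁.Finite) (h2 : A₂.Finite) (h3 : A₃.Finite)
    (d12 : Disjoint A₁ A₂) (d13 : Disjoint A₁ A₃) (d23 : Disjoint A₂ A₃)
    (hρ : ρ • A₁ = A₃) (hσ : σ • (A₁ ∪ A₃) = A₁ ∪ A₂) :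
    A₁ = ∅ ∧ A₂ = ∅ ∧ A₃ = ∅ := by
  classical
  set B : Set (FreeGroup α) := A₁ ∪ A₂ ∪ A₃ with hB
  have hBfin : B.Finite := (h1.union h2).union h3
  have hBempty : B = ∅ := by
    by_contra hne
    obtain ⟨x₀, hx₀⟩ := Set.nonempty_iff_ne_empty.mpr hne
    set next : FreeGroup α → FreeGroup α :=
      fun x => if x ∈ A₃ then ρ⁻¹ * x else σ⁻¹ * x with hnext
    set X : ℕ → FreeGroup α := fun k => next^[k] x₀ with hX
    have hXsucc : ∀ k, X (k + 1) = next (X k) := by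
      intro k
      simp only [hX, Function.iterate_succ_apply']
    have hXB : ∀ k, X k ∈ B := by
      intro k
      induction k with
      | zero => exact hx₀
      | succ k ih =>
        rw [hXsucc k]
        by_cases h : X k ∈ A₃
        · rw [hnext]
          simp only [h, if_true]
          rw [← hρ] at h
          obtain ⟨a, ha, haa⟩ := Set.mem_smul_set.mp h
          have : ρ⁻¹ * X k = a := by
            rw [← haa, smul_eq_mul, inv_mul_cancel_left]
          rw [this]
          exact Or.inl (Or.inl ha)
        · rw [hnext]
          simp only [h, if_false]
          have hmem : X k ∈ A₁ ∪ A₂ := by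
            rcases ih with h' | h'
            · exact h'
            · exact absurd h' h
          rw [← hσ] at hmem
          obtain ⟨y, hy, hyy⟩ := Set.mem_smul_set.mp hmem
          have : σ⁻¹ * X k = y := by
            rw [← hyy, smul_eq_mul, inv_mul_cancel_left]
          rw [this]
          rcases hy with h' | h'
          · exact Or.inl (Or.inl h')
          · exact Or.inr h'
    set f : FreeGroup Bool →* FreeGroup α := FreeGroup.lift (fun b => cond b ρ σ) with hf
    set W : ℕ → FreeGroup Bool := fun k =>
      Nat.rec 1 (fun k wk =>
        (if X k ∈ A₃ then (FreeGroup.of true)⁻¹ else (FreeGroup.of false)⁻¹) * wk) k with hW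
    have hWsucc : ∀ k, W (k + 1) =
        (if X k ∈ A₃ then (FreeGroup.of true)⁻¹ else (FreeGroup.of false)⁻¹) * W k :=
      fun k => rfl
    have hfW : ∀ k, f (W k) * x₀ = X k := by
      intro k
      induction k with
      | zero =>
        show f 1 * x₀ = X 0
        rw [map_one, one_mul]
        rfl
      | succ k ih =>
        rw [hWsucc k, _root_.map_mul, hXsucc k, hnext]
        by_cases h : X k ∈ A₃
        · simp only [h, if_true]
          rw [_root_.map_inv, FreeGroup.lift_apply_of]
          show (cond true ρ σ)⁻¹ * f (W k) * x₀ = ρ⁻¹ * X k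
          rw [mul_assoc, ih]
          rfl
        · simp only [h, if_false]
          rw [_root_.map_inv, FreeGroup.lift_apply_of]
          show (cond false ρ σ)⁻¹ * f (W k) * x₀ = σ⁻¹ * X k
          rw [mul_assoc, ih]
          rfl
    set ε : FreeGroup Bool →* Multiplicative ℤ :=
      FreeGroup.lift (fun _ => Multiplicative.ofAdd (1 : ℤ)) with hε
    have hεW : ∀ k, ε (W k) = Multiplicative.ofAdd (-(k : ℤ)) := by
      intro k
      induction k with
      | zero =>
        show ε 1 = _
        rw [map_one]
        simp
      | succ k ih =>
        rw [hWsucc k, _root_.map_mul, ih]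
        by_cases h : X k ∈ A₃ <;>
        · simp only [h, if_true, if_false, _root_.map_inv, hε, FreeGroup.lift_apply_of]
          rw [← ofAdd_neg, ← ofAdd_add]
          congr 1
          push_cast
          ring
    haveI : Finite ↥B := hBfin.to_subtype
    obtain ⟨k, l, hkl, he⟩ :=
      Finite.exists_ne_map_eq_of_infinite (fun k : ℕ => (⟨X k, hXB k⟩ : B))
    have hXkl : X k = X l := congrArg Subtype.val he
    have h5 : f (W k) = f (W l) := by
      apply mul_right_cancel (b := x₀)
      rw [hfW k, hfW l, hXkl]
    have h6 : f (W k * (W l)⁻¹) = 1 := by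
      rw [_root_.map_mul, _root_.map_inv, h5, mul_inv_cancel]
    have h7 : W k * (W l)⁻¹ = 1 := Stmt8Aux.no_relation ρ σ hnc h6
    have h8 : W k = W l := by
      rwa [mul_inv_eq_one] at h7
    have h9 : Multiplicative.ofAdd (-(k : ℤ)) = Multiplicative.ofAdd (-(l : ℤ)) := by
      rw [← hεW k, ← hεW l, h8]
    have : (k : ℤ) = (l : ℤ) := by
      have := Multiplicative.ofAdd.injective h9
      omega
    exact hkl (by exact_mod_cast this)
  have hu := Set.union_empty_iff.mp hBempty
  have hu2 := Set.union_empty_iff.mp hu.1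
  exact ⟨hu2.1, hu2.2, hu.2⟩
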